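/- Let E = (E^0, E^1, s, r) be a directed graph, let x ∈ ∂E be a path that is not rational, let K be a field and let a = (a_e) ∈ (K^*)^{E^1}. Suppose y ∈ ∂E is tail-equivalent to x and that μ_1, μ_2, ν_1, ν_2 ∈ F(E) and p_1, p_2 ∈ ∂E satisfy y = μ_1 p_1 = μ_2 p_2 and x = ν_1 p_1 = ν_2 p_2. Then a_{μ_1} a_{ν_1}^{-1} = a_{μ_2} a_{ν_2}^{-1} in K^* and |μ_1| − |ν_1| = |μ_2| − |ν_2|. -/

import Mathlib

open scoped Classical

/-- A directed graph: vertices, edges, source and range maps. -/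
structure DirGraph : Type 1 where
  V : Type
  E : Type
  s : E → V
  r : E → V

namespace DirGraph

variable (G : DirGraph)

/-- A finite path: a source vertex together with a compatible list of edges
(the empty list gives the path of length 0 at `src`). -/
structure FinPath where
  src : G.V
  edges : List G.E
  src_eq : ∀ e ∈ edges.head?, G.s e = src
  chain : edges.Chain' (fun e f => G.r e = G.s f)

variable {G}

/-- The range of a finite path. -/
def FinPath.rng (μ : G.FinPath) : G.V :=
  ((μ.edges.getLast?).map G.r).getD μ.src

/-- The length of a finite path. -/
def FinPath.length (μ : G.FinPath) : ℕ := μ.edges.length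

variable (G)

/-- An infinite path. -/
structure InfPath where
  edges : ℕ → G.E
  chain : ∀ n, G.r (edges n) = G.s (edges (n + 1))

/-- The source of an infinite path. -/
def InfPath.src {G : DirGraph} (p : G.InfPath) : G.V := G.s (p.edges 0)

def IsSink (v : G.V) : Prop := ∀ e, G.s e ≠ v

def IsInfEmitter (v : G.V) : Prop := {e | G.s e = v}.Infinite

def IsSingular (v : G.V) : Prop := IsSink G v ∨ IsInfEmitter G v

/-- Boundary paths: infinite paths, together with finite paths ending in a singular vertex. -/
def BPath : Type := {x : G.FinPath ⊕ G.InfPath // ∀ μ, x = Sum.inl μ → IsSingular G μ.rng}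

variable {G}

/-- The source of a boundary path. -/
def BPath.src (x : G.BPath) : G.V :=
  match x.1 with
  | Sum.inl μ => μ.src
  | Sum.inr p => p.src

def BPath.IsInfinite (x : G.BPath) : Prop := ∃ p, x.1 = Sum.inr p

/-- `IsCat μ p x` means `x = μ p`, i.e. `x` is the concatenation of the finite path `μ`
with the boundary path `p` (in particular `r(μ) = s(p)`). -/
def IsCat (μ : G.FinPath) (p x : G.BPath) : Prop :=
  μ.rng = p.src ∧
  match p.1, x.1 with
  | Sum.inl q, Sum.inl ξ => ξ.src = μ.src ∧ ξ.edges = μ.edges ++ q.edges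
  | Sum.inr q, Sum.inr ξ =>
      (∀ (i : ℕ) (h : i < μ.edges.length), ξ.edges i = μ.edges.get ⟨i, h⟩) ∧
      (∀ i : ℕ, ξ.edges (μ.edges.length + i) = q.edges i)
  | _, _ => False

/-- `x ∼_k y` : tail equivalence with lag `k`. -/
def TailEqLag (x y : G.BPath) (k : ℤ) : Prop :=
  ∃ (μ ν : G.FinPath) (p : G.BPath),
    IsCat μ p x ∧ IsCat ν p y ∧ (μ.length : ℤ) - (ν.length : ℤ) = k

/-- Tail equivalence. -/
def TailEq (x y : G.BPath) : Prop := ∃ k, TailEqLag x y k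

/-- The tail-equivalence class (orbit) of a boundary path. -/
def orbit (x : G.BPath) : Set G.BPath := {y | TailEq y x}

/-- A closed path: positive length, same source and range. -/
def FinPath.IsClosed (c : G.FinPath) : Prop := 0 < c.length ∧ c.rng = c.src

/-- A boundary path is rational if it is tail equivalent to `c^∞` for some closed path `c`;
here `c^∞` is characterized as the unique boundary path `p` with `p = c p`. -/
def IsRational (x : G.BPath) : Prop :=
  ∃ (c : G.FinPath) (p : G.BPath), 0 < c.length ∧ IsCat c p p ∧ TailEq x p

/-- A simple closed path: a closed path which is not a proper power of a closed path. -/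
def FinPath.IsSimpleClosed (c : G.FinPath) : Prop :=
  c.IsClosed ∧
    ¬ ∃ (d : G.FinPath) (n : ℕ), 2 ≤ n ∧ d.IsClosed ∧ c.src = d.src ∧
        c.edges = (List.replicate n d.edges).flatten

/-- A cycle: a closed path passing through no vertex twice. -/
def FinPath.IsCycle (c : G.FinPath) : Prop := c.IsClosed ∧ (c.edges.map G.s).Nodup

/-- An exit for a finite path. -/
def FinPath.HasExit (c : G.FinPath) : Prop :=
  ∃ (i : ℕ) (h : i < c.edges.length) (e : G.E),
    G.s e = G.s (c.edges.get ⟨i, h⟩) ∧ e ≠ c.edges.get ⟨i, h⟩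

/-- `c` is a rotation of `d`. -/
def FinPath.IsRotationOf (c d : G.FinPath) : Prop := ∃ i, c.edges = d.edges.rotate i

/-- A maximal cycle: a cycle such that any cycle from which there is a finite path to its
source is a rotation of it. -/
def FinPath.IsMaxCycle (c : G.FinPath) : Prop :=
  c.IsCycle ∧ ∀ d : G.FinPath, d.IsCycle →
    (∃ μ : G.FinPath, μ.src = d.src ∧ μ.rng = c.src) → d.IsRotationOf c

/-- A maximal sink: a sink with no finite path from the source of any cycle to it. -/
def IsMaxSink (G : DirGraph) (v : G.V) : Prop :=
  IsSink G v ∧ ¬ ∃ (d μ : G.FinPath), d.IsCycle ∧ μ.src = d.src ∧ μ.rng = v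

/-- A graph is row-finite if every vertex emits finitely many edges. -/
def RowFinite (G : DirGraph) : Prop := ∀ v : G.V, {e | G.s e = v}.Finite

/-- The set of predecessors of a vertex. -/
def preds (G : DirGraph) (v : G.V) : Set G.V := {w | ∃ μ : G.FinPath, μ.src = w ∧ μ.rng = v}

/-- The finite path of length 0 at a vertex. -/
def vertexPath (G : DirGraph) (v : G.V) : G.FinPath :=
  ⟨v, [], by intro e he; simp at he, List.isChain_nil⟩

/-- A singular vertex, seen as a boundary path. -/
def vertexBPath (G : DirGraph) (v : G.V) (h : IsSingular G v) : G.BPath :=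
  ⟨Sum.inl (vertexPath G v), by
    intro μ hμ
    injection hμ with h2
    subst h2
    exact h⟩

/-- The finite path consisting of a single edge. -/
def singleE (G : DirGraph) (e : G.E) : G.FinPath :=
  ⟨G.s e, [e], by
    intro f hf
    simp only [List.head?_cons, Option.mem_def, Option.some.injEq] at hf
    subst hf
    rfl, List.isChain_singleton e⟩

/-- `a_μ`: the product of the values of `a` along a finite path. -/
def aval {G : DirGraph} {K : Type} [Field K] (a : G.E → K) (μ : G.FinPath) : K :=
  (μ.edges.map a).prod

/-! ## The Leavitt path algebra -/

/-- Generators of the Leavitt path algebra: vertices, edges and ghost edges. -/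
inductive Gen (G : DirGraph) : Type
  | vtx : G.V → Gen G
  | edg : G.E → Gen G
  | ghd : G.E → Gen G

/-- The defining relations of the Leavitt path algebra. -/
inductive LRel (G : DirGraph) (K : Type) [Field K] :
    FreeAlgebra K (Gen G) → FreeAlgebra K (Gen G) → Prop
  | vv_eq (v : G.V) :
      LRel G K (FreeAlgebra.ι K (Gen.vtx v) * FreeAlgebra.ι K (Gen.vtx v))
        (FreeAlgebra.ι K (Gen.vtx v))
  | vv_ne {v w : G.V} (h : v ≠ w) :
      LRel G K (FreeAlgebra.ι K (Gen.vtx v) * FreeAlgebra.ι K (Gen.vtx w)) 0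
  | e1l (e : G.E) :
      LRel G K (FreeAlgebra.ι K (Gen.vtx (G.s e)) * FreeAlgebra.ι K (Gen.edg e))
        (FreeAlgebra.ι K (Gen.edg e))
  | e1r (e : G.E) :
      LRel G K (FreeAlgebra.ι K (Gen.edg e) * FreeAlgebra.ι K (Gen.vtx (G.r e)))
        (FreeAlgebra.ι K (Gen.edg e))
  | e2l (e : G.E) :
      LRel G K (FreeAlgebra.ι K (Gen.vtx (G.r e)) * FreeAlgebra.ι K (Gen.ghd e))
        (FreeAlgebra.ι K (Gen.ghd e))
  | e2r (e : G.E) :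
      LRel G K (FreeAlgebra.ι K (Gen.ghd e) * FreeAlgebra.ι K (Gen.vtx (G.s e)))
        (FreeAlgebra.ι K (Gen.ghd e))
  | ck1_eq (e : G.E) :
      LRel G K (FreeAlgebra.ι K (Gen.ghd e) * FreeAlgebra.ι K (Gen.edg e))
        (FreeAlgebra.ι K (Gen.vtx (G.r e)))
  | ck1_ne {e f : G.E} (h : e ≠ f) :
      LRel G K (FreeAlgebra.ι K (Gen.ghd e) * FreeAlgebra.ι K (Gen.edg f)) 0
  | ck2 (v : G.V) (hfin : {e | G.s e = v}.Finite) (hne : ∃ e, G.s e = v) :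
      LRel G K (FreeAlgebra.ι K (Gen.vtx v))
        (∑ e ∈ hfin.toFinset, FreeAlgebra.ι K (Gen.edg e) * FreeAlgebra.ι K (Gen.ghd e))

/-- The Leavitt path algebra of `G` over `K`. -/
abbrev LPA (G : DirGraph) (K : Type) [Field K] : Type := RingQuot (LRel G K)

/-- The image of a vertex in the Leavitt path algebra. -/
def ofV (G : DirGraph) (K : Type) [Field K] (v : G.V) : LPA G K :=
  RingQuot.mkAlgHom K (LRel G K) (FreeAlgebra.ι K (Gen.vtx v))

/-- The image of an edge in the Leavitt path algebra. -/
def ofE (G : DirGraph) (K : Type) [Field K] (e : G.E) : LPA G K :=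
  RingQuot.mkAlgHom K (LRel G K) (FreeAlgebra.ι K (Gen.edg e))

/-- The image of a ghost edge in the Leavitt path algebra. -/
def ofG (G : DirGraph) (K : Type) [Field K] (e : G.E) : LPA G K :=
  RingQuot.mkAlgHom K (LRel G K) (FreeAlgebra.ι K (Gen.ghd e))

/-- The element `μ` of the Leavitt path algebra associated to a finite path `μ`. -/
def pathElem (G : DirGraph) (K : Type) [Field K] (μ : G.FinPath) : LPA G K :=
  ofV G K μ.src * (μ.edges.map (ofE G K)).prod

/-- The element `μ^*` of the Leavitt path algebra associated to a finite path `μ`. -/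
def pathStarElem (G : DirGraph) (K : Type) [Field K] (μ : G.FinPath) : LPA G K :=
  (μ.edges.reverse.map (ofG G K)).prod * ofV G K μ.src

/-- The degree-`n` homogeneous component of the canonical `ℤ`-grading of the Leavitt
path algebra: the span of the monomials `μ ν^*` with `|μ| - |ν| = n`. -/
def LPAdeg (G : DirGraph) (K : Type) [Field K] (n : ℤ) : Submodule K (LPA G K) :=
  Submodule.span K {x | ∃ μ ν : G.FinPath, μ.rng = ν.rng ∧
    (μ.length : ℤ) - (ν.length : ℤ) = n ∧ x = pathElem G K μ * pathStarElem G K ν}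

/-- `W` is a `ℤ`-grading making `M` a graded module over the canonically graded
Leavitt path algebra. -/
def IsModuleGrading (G : DirGraph) (K : Type) [Field K] (M : Type) [AddCommGroup M]
    [Module K M] [Module (LPA G K) M] (W : ℤ → Submodule K M) : Prop :=
  DirectSum.IsInternal W ∧
    ∀ (m k : ℤ) (a : LPA G K) (y : M), a ∈ LPAdeg G K m → y ∈ W k → a • y ∈ W (m + k)

/-- A set is graded (with respect to a grading `W`) if each of its elements is a finite sum
of homogeneous elements of the set. -/
def GradedCarrier {K M : Type} [Field K] [AddCommGroup M] [Module K M]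
    (W : ℤ → Submodule K M) (S : Set M) : Prop :=
  ∀ m ∈ S, ∃ l : List M, (∀ z ∈ l, z ∈ S ∧ ∃ k, z ∈ W k) ∧ l.sum = m

/-- A graded isomorphism between graded modules over the Leavitt path algebra. -/
def GradedIsoLPA (G : DirGraph) (K : Type) [Field K] (M N : Type)
    [AddCommGroup M] [AddCommGroup N] [Module K M] [Module K N]
    [Module (LPA G K) M] [Module (LPA G K) N]
    (W : ℤ → Submodule K M) (W' : ℤ → Submodule K N) : Prop :=
  ∃ f : M ≃ₗ[LPA G K] N, (∀ k, ∀ m ∈ W k, f m ∈ W' k) ∧ ∀ k, ∀ n ∈ W' k, f.symm n ∈ W k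

/-- A module over the Leavitt path algebra is unital if it is generated by the images of the
vertices. -/
def IsUnitalModule (G : DirGraph) (K : Type) [Field K] (M : Type) [AddCommGroup M]
    [Module (LPA G K) M] : Prop :=
  ∀ m : M, m ∈ Submodule.span (LPA G K) {y : M | ∃ (v : G.V) (m' : M), y = ofV G K v • m'}

/-! ## Chen modules, specified by a basis and the action of the generators -/

/-- A specification of the (twisted) Chen module attached to a boundary path `x`:
an `L_K(E)`-module `M` which is a `K'`-vector space with basis the tail-equivalence class
of `x`, the generators acting by the τ-twisted shift formulas. Here `K ⊆ K'` is a field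
extension and `τ : E¹ → K'` is a family of nonzero scalars. -/
structure ChenSpecT (G : DirGraph) (K K' : Type) [Field K] [Field K'] [Algebra K K']
    (τ : G.E → K') (x : G.BPath) (M : Type) [AddCommGroup M] [Module K' M]
    [Module (LPA G K) M] : Type where
  tau_ne : ∀ e, τ e ≠ 0
  basis : Module.Basis (orbit x) K' M
  act_v : ∀ (v : G.V) (p : orbit x),
    ofV G K v • basis p = if v = BPath.src (p : G.BPath) then basis p else 0
  act_e : ∀ (e : G.E) (p q : orbit x), IsCat (singleE G e) (p : G.BPath) (q : G.BPath) →
    ofE G K e • basis p = τ e • basis q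
  act_e_zero : ∀ (e : G.E) (p : orbit x),
    (¬ ∃ q : G.BPath, IsCat (singleE G e) (p : G.BPath) q) → ofE G K e • basis p = 0
  act_g : ∀ (e : G.E) (p q : orbit x), IsCat (singleE G e) (p : G.BPath) (q : G.BPath) →
    ofG G K e • basis q = (τ e)⁻¹ • basis p
  act_g_zero : ∀ (e : G.E) (q : orbit x),
    (¬ ∃ p : G.BPath, IsCat (singleE G e) p (q : G.BPath)) → ofG G K e • basis q = 0

/-- Specification of the Chen module `V_{[x]}^a` twisted by `a : E¹ → K^*`
(`a = 1` gives `V_{[x]}`). -/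
abbrev ChenSpec (G : DirGraph) (K : Type) [Field K] (a : G.E → K) (x : G.BPath) (M : Type)
    [AddCommGroup M] [Module K M] [Module (LPA G K) M] : Type :=
  ChenSpecT G K K a x M

/-- The canonical grading on a Chen module: the degree-`k` component is spanned by the basis
elements tail-equivalent to `x` with lag `k`. -/
def chenW {G : DirGraph} {K' : Type} [Field K'] {x : G.BPath} {M : Type}
    [AddCommGroup M] [Module K' M] (b : Module.Basis (orbit x) K' M) (k : ℤ) : Submodule K' M :=
  Submodule.span K' (⇑b '' {p : orbit x | TailEqLag (p : G.BPath) x k})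

/-! ## The module `K L_x` -/

/-- The set `L_x` of pairs `(y, k)` with `y ∼_k x`. -/
def Lset (G : DirGraph) (x : G.BPath) : Set (G.BPath × ℤ) := {yk | TailEqLag yk.1 x yk.2}

/-- The underlying `K`-vector space of the module `K L_x`, with basis `L_x`. -/
abbrev KLCarrier (G : DirGraph) (K : Type) [Field K] (x : G.BPath) : Type := (Lset G x) →₀ K

/-- Specification of the `L_K(E)`-module structure on `K L_x`, given by
`(μ ν^*) ⬝ (y, k) = (μ p, |μ| - |ν| + k)` when `y = ν p`, and `0` otherwise. The module
structure is encoded as a `K`-algebra homomorphism `ρ` to the endomorphism algebra. -/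
def KLSpec (G : DirGraph) (K : Type) [Field K] (x : G.BPath)
    (ρ : LPA G K →ₐ[K] Module.End K (KLCarrier G K x)) : Prop :=
  (∀ (μ ν : G.FinPath), μ.rng = ν.rng → ∀ (yk zk : Lset G x) (p : G.BPath),
      IsCat ν p (yk : G.BPath × ℤ).1 → IsCat μ p (zk : G.BPath × ℤ).1 →
      (zk : G.BPath × ℤ).2 = (yk : G.BPath × ℤ).2 + (μ.length : ℤ) - (ν.length : ℤ) →
      ρ (pathElem G K μ * pathStarElem G K ν) (Finsupp.single yk 1) = Finsupp.single zk 1) ∧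
  (∀ (μ ν : G.FinPath), μ.rng = ν.rng → ∀ yk : Lset G x,
      (¬ ∃ p : G.BPath, IsCat ν p (yk : G.BPath × ℤ).1) →
      ρ (pathElem G K μ * pathStarElem G K ν) (Finsupp.single yk 1) = 0)

/-- The canonical grading of `K L_x`: `(y, k)` is homogeneous of degree `k`. -/
noncomputable def KLgr (G : DirGraph) (K : Type) [Field K] (x : G.BPath) (k : ℤ) :
    Submodule K (KLCarrier G K x) :=
  Submodule.span K {m | ∃ yk : Lset G x, (yk : G.BPath × ℤ).2 = k ∧ m = Finsupp.single yk 1}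

end DirGraph

open DirGraph

namespace DirGraph

variable {G : DirGraph}

lemma BPath.src_inl' {x : G.BPath} {q : G.FinPath} (h : x.1 = Sum.inl q) :
    x.src = q.src := by
  unfold BPath.src
  rw [h]

lemma BPath.src_inr' {x : G.BPath} {q : G.InfPath} (h : x.1 = Sum.inr q) :
    x.src = q.src := by
  unfold BPath.src
  rw [h]

lemma FinPath.rng_eq_nil {μ : G.FinPath} (h : μ.edges = []) : μ.rng = μ.src := by
  simp [FinPath.rng, h]

lemma FinPath.rng_eq_last {μ : G.FinPath} {e : G.E} (h : μ.edges.getLast? = some e) :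
    μ.rng = G.r e := by
  simp [FinPath.rng, h]

lemma FinPath.rng_congr {μ ν : G.FinPath} (h : μ.edges = ν.edges) (h2 : μ.src = ν.src) :
    μ.rng = ν.rng := by
  simp [FinPath.rng, h, h2]

/-- If `μ = ν σ` (on edges), with compatible sources, then `μ` and `σ` have the same range. -/
lemma FinPath.rng_of_edges_append {μ ν σ : G.FinPath} (h : μ.edges = ν.edges ++ σ.edges)
    (hsrc : σ.src = ν.rng) (hsrc2 : μ.src = ν.src) : μ.rng = σ.rng := by
  rcases hσ : σ.edges.getLast? with _ | e
  · have he : σ.edges = [] := List.getLast?_eq_none_iff.mp hσ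
    rw [FinPath.rng_eq_nil he, hsrc]
    exact FinPath.rng_congr (by rw [h, he, List.append_nil]) hsrc2
  · rw [FinPath.rng_eq_last hσ, FinPath.rng_eq_last (μ := μ)
      (by rw [h, List.getLast?_append, hσ]; rfl)]

/-- Range of a path given by a formula for its entries along an infinite chain. -/
lemma FinPath.rng_eq_of_fun {τ : G.FinPath} {f : ℕ → G.E}
    (hchain : ∀ i, G.r (f i) = G.s (f (i + 1)))
    (hget : ∀ (i : ℕ) (h : i < τ.edges.length), τ.edges.get ⟨i, h⟩ = f i)
    (hsrc : τ.src = G.s (f 0)) : τ.rng = G.s (f τ.edges.length) := by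
  rcases hτ : τ.edges.getLast? with _ | e
  · have he : τ.edges = [] := List.getLast?_eq_none_iff.mp hτ
    rw [FinPath.rng_eq_nil he, hsrc, he]
    rfl
  · have hne : τ.edges ≠ [] := by
      intro hc; rw [hc] at hτ; simp at hτ
    have hpos : 0 < τ.edges.length := List.length_pos_iff.mpr hne
    have hlt : τ.edges.length - 1 < τ.edges.length := Nat.sub_lt hpos one_pos
    have he' : e = f (τ.edges.length - 1) := by
      have h1 := List.getLast?_eq_getLast hne
      rw [h1] at hτ
      have h2 : τ.edges.getLast hne = τ.edges.get ⟨τ.edges.length - 1, hlt⟩ := by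
        simp [List.getLast_eq_getElem]
      rw [h2, hget _ hlt] at hτ
      exact (Option.some.injEq _ _ ▸ hτ).symm
    rw [FinPath.rng_eq_last hτ, he', hchain, Nat.sub_add_cancel hpos]

lemma isCat_nil (p : G.BPath) : IsCat (vertexPath G p.src) p p := by
  refine ⟨rfl, ?_⟩
  rcases hp : p.1 with q | q
  · exact ⟨(BPath.src_inl' hp).symm, rfl⟩
  · refine ⟨fun i h => absurd h (by simp [vertexPath]), fun i => by simp [vertexPath]⟩

/-- Concatenation of finite paths. -/
def FinPath.cat (μ σ : G.FinPath) (h : μ.rng = σ.src) : G.FinPath where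
  src := μ.src
  edges := μ.edges ++ σ.edges
  src_eq := by
    intro e he
    rcases hμ : μ.edges with _ | ⟨f, l⟩
    · rw [hμ, List.nil_append] at he
      rw [σ.src_eq e he, ← h, FinPath.rng_eq_nil hμ]
    · rw [hμ] at he
      simp only [List.cons_append, List.head?_cons, Option.mem_def, Option.some.injEq] at he
      subst he
      exact μ.src_eq _ (by rw [hμ]; rfl)
  chain := by
    refine List.IsChain.append μ.chain σ.chain ?_
    intro e he f hf
    rw [FinPath.rng_eq_last (Option.mem_def.mp he)] at h
    rw [h, σ.src_eq f hf]

lemma FinPath.cat_edges (μ σ : G.FinPath) (h : μ.rng = σ.src) :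
    (μ.cat σ h).edges = μ.edges ++ σ.edges := rfl

lemma FinPath.cat_src (μ σ : G.FinPath) (h : μ.rng = σ.src) :
    (μ.cat σ h).src = μ.src := rfl

lemma FinPath.cat_rng (μ σ : G.FinPath) (h : μ.rng = σ.src) :
    (μ.cat σ h).rng = σ.rng :=
  FinPath.rng_of_edges_append (ν := μ) rfl h.symm rfl

/-- Associativity of concatenation with a boundary path. -/
lemma IsCat.cat {μ σ : G.FinPath} {p q y : G.BPath} (h1 : IsCat μ p y) (h2 : IsCat σ q p)
    (h : μ.rng = σ.src) : IsCat (μ.cat σ h) q y := by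
  obtain ⟨hr1, hm1⟩ := h1
  obtain ⟨hr2, hm2⟩ := h2
  refine ⟨by rw [FinPath.cat_rng]; exact hr2, ?_⟩
  rcases hq : q.1 with t | t <;> rw [hq] at hm2 <;>
    rcases hp : p.1 with u | u <;> rw [hp] at hm1 hm2 <;>
      rcases hy : y.1 with w | w <;> rw [hy] at hm1
  · -- q inl, p inl, y inl
    exact ⟨hm1.1, by rw [hm1.2, hm2.2, FinPath.cat_edges, List.append_assoc]⟩
  · exact hm1.elim
  · exact hm2.elim
  · exact hm2.elim
  · exact hm2.elim
  · exact hm2.elim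
  · exact hm1.elim
  · -- q inr, p inr, y inr
    obtain ⟨ha1, hb1⟩ := hm1
    obtain ⟨ha2, hb2⟩ := hm2
    constructor
    · intro i hi
      have hi' : i < (μ.edges ++ σ.edges).length := hi
      show w.edges i = (μ.edges ++ σ.edges).get ⟨i, hi'⟩
      rw [List.get_eq_getElem]
      rcases Nat.lt_or_ge i μ.edges.length with hlt | hge
      · rw [List.getElem_append_left hlt]
        have := ha1 i hlt
        rw [List.get_eq_getElem] at this
        exact this
      · obtain ⟨j, rfl⟩ := Nat.exists_eq_add_of_le hge
        have hj : j < σ.edges.length := by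
          simp only [List.length_append] at hi'
          omega
        have h2 : (μ.edges ++ σ.edges)[μ.edges.length + j]'hi' = σ.edges[j]'hj := by
          rw [List.getElem_append_right (Nat.le_add_right _ _)]
          congr 1
          omega
        rw [h2]
        have := (hb1 j).trans (ha2 j hj)
        rw [List.get_eq_getElem] at this
        exact this
    · intro i
      have hlen : (μ.cat σ h).edges.length = μ.edges.length + σ.edges.length := by
        rw [FinPath.cat_edges, List.length_append]
      rw [hlen, Nat.add_assoc, hb1, hb2]

/-- The key prefix-comparison lemma: two decompositions of the same boundary path
are related by a connecting finite path. -/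
lemma exists_connector {ν₁ ν₂ : G.FinPath} {p₁ p₂ x : G.BPath}
    (h₃ : IsCat ν₁ p₁ x) (h₄ : IsCat ν₂ p₂ x) (hle : ν₁.length ≤ ν₂.length) :
    ∃ σ : G.FinPath, IsCat σ p₂ p₁ ∧ σ.src = p₁.src ∧ ν₂.edges = ν₁.edges ++ σ.edges := by
  obtain ⟨hr1, hm1⟩ := h₃
  obtain ⟨hr2, hm2⟩ := h₄
  have hle' : ν₁.edges.length ≤ ν₂.edges.length := hle
  obtain ⟨k, hnk⟩ : ∃ k, ν₂.edges.length = ν₁.edges.length + k := ⟨ν₂.edges.length - ν₁.edges.length, by omega⟩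
  rcases hx : x.1 with ξ | ξ <;> rw [hx] at hm1 hm2 <;>
    rcases hp1 : p₁.1 with q₁ | q₁ <;> rw [hp1] at hm1 <;>
      rcases hp2 : p₂.1 with q₂ | q₂ <;> rw [hp2] at hm2
  · -- all finite
    obtain ⟨hs1, he1⟩ := hm1
    obtain ⟨hs2, he2⟩ := hm2
    have hq1 : q₁.edges = ξ.edges.drop ν₁.edges.length := by rw [he1, List.drop_left]
    have hq2 : q₂.edges = ξ.edges.drop ν₂.edges.length := by rw [he2, List.drop_left]
    have hv1 : ν₁.edges = ξ.edges.take ν₁.edges.length := by rw [he1, List.take_left]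
    have hv2 : ν₂.edges = ξ.edges.take ν₂.edges.length := by rw [he2, List.take_left]
    have hsrc_eq : ∀ e ∈ (q₁.edges.take k).head?, G.s e = q₁.src := by
      intro e he
      refine q₁.src_eq e ?_
      cases k with
      | zero => simp at he
      | succ n =>
        rcases hq : q₁.edges with _ | ⟨f, l⟩
        · rw [hq] at he; simp at he
        · rw [hq] at he
          simpa [List.take_succ_cons] using he
    set σ : G.FinPath :=
      ⟨q₁.src, q₁.edges.take k, hsrc_eq, q₁.chain.prefix (List.take_prefix k q₁.edges)⟩
      with hσdef
    have hE1 : ν₂.edges = ν₁.edges ++ σ.edges := by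
      show ν₂.edges = ν₁.edges ++ q₁.edges.take k
      rw [hv2, hnk, List.take_add, ← hv1, ← hq1]
    have hE2 : q₁.edges = σ.edges ++ q₂.edges := by
      show q₁.edges = q₁.edges.take k ++ q₂.edges
      rw [hq2, hnk, ← List.drop_drop, ← hq1]
      exact (List.take_append_drop k q₁.edges).symm
    refine ⟨σ, ⟨?_, ?_⟩, (BPath.src_inl' hp1).symm, hE1⟩
    · -- rng = p₂.src
      have hr : ν₂.rng = σ.rng := by
        refine FinPath.rng_of_edges_append hE1 ?_ (by rw [← hs2, hs1])
        show q₁.src = ν₁.rng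
        rw [hr1, BPath.src_inl' hp1]
      rw [← hr, hr2, BPath.src_inl' hp2]
    · -- match component
      rw [hp1, hp2]
      exact ⟨rfl, hE2⟩
  · exact hm2.elim
  · exact hm1.elim
  · exact hm1.elim
  · exact hm1.elim
  · exact hm1.elim
  · exact hm2.elim
  · -- all infinite
    obtain ⟨ha1, hb1⟩ := hm1
    obtain ⟨ha2, hb2⟩ := hm2
    have hchain : ∀ i, G.r (q₁.edges i) = G.s (q₁.edges (i + 1)) := q₁.chain
    have hsrc_eq : ∀ e ∈ (List.ofFn (fun i : Fin k => q₁.edges i)).head?, G.s e = q₁.src := by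
      intro e he
      cases k with
      | zero => simp at he
      | succ n =>
        rw [List.ofFn_succ] at he
        simp only [List.head?_cons, Option.mem_def, Option.some.injEq] at he
        subst he
        rfl
    have hchain' : (List.ofFn (fun i : Fin k => q₁.edges i)).Chain' (fun e f => G.r e = G.s f) := by
      refine List.isChain_iff_getElem.mpr ?_
      intro i hi
      simp only [List.get_ofFn, List.getElem_ofFn, List.length_ofFn] at *
      exact q₁.chain i
    set σ : G.FinPath := ⟨q₁.src, List.ofFn (fun i : Fin k => q₁.edges i), hsrc_eq, hchain'⟩
      with hσdef
    have hget : ∀ (i : ℕ) (h : i < σ.edges.length), σ.edges.get ⟨i, h⟩ = q₁.edges i := by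
      intro i h
      simp [hσdef, List.get_ofFn]
    have hlen : σ.edges.length = k := by simp [hσdef]
    have hE1 : ν₂.edges = ν₁.edges ++ σ.edges := by
      refine List.ext_getElem ?_ ?_
      · simp only [List.length_append, hlen]
        omega
      · intro i hh1 hh2
        have hi : i < ν₂.edges.length := hh1
        have hx2 : ξ.edges i = ν₂.edges[i] := by
          have := ha2 i hi
          rwa [List.get_eq_getElem] at this
        rw [← hx2]
        rcases Nat.lt_or_ge i ν₁.edges.length with hlt | hge
        · rw [List.getElem_append_left hlt]
          have := ha1 i hlt
          rw [List.get_eq_getElem] at this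
          exact this
        · have hj : i - ν₁.edges.length < σ.edges.length := by
            simp only [List.length_append] at hh2
            omega
          have h2 : (ν₁.edges ++ σ.edges)[i]'hh2 = σ.edges[i - ν₁.edges.length]'hj :=
            List.getElem_append_right hge
          rw [h2]
          have h3 := hget (i - ν₁.edges.length) hj
          rw [List.get_eq_getElem] at h3
          rw [h3, ← hb1 (i - ν₁.edges.length)]
          congr 1
          omega
    refine ⟨σ, ⟨?_, ?_⟩, (BPath.src_inr' hp1).symm, hE1⟩
    · -- rng = p₂.src
      have hrng := FinPath.rng_eq_of_fun (τ := σ) hchain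
        (fun i h => hget i h) rfl
      rw [hrng, hlen]
      have h1 : ξ.edges (ν₁.edges.length + k) = q₁.edges k := hb1 k
      have h2 : ξ.edges (ν₂.edges.length + 0) = q₂.edges 0 := hb2 0
      rw [Nat.add_zero, hnk] at h2
      rw [BPath.src_inr' hp2]
      show G.s (q₁.edges k) = q₂.src
      rw [← h1, h2]
      rfl
    · -- match component
      rw [hp1, hp2]
      constructor
      · intro i hi
        exact (hget i hi).symm
      · intro i
        rw [hlen]
        have h1 : ξ.edges (ν₁.edges.length + (k + i)) = q₁.edges (k + i) := hb1 (k + i)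
        have h2 : ξ.edges (ν₂.edges.length + i) = q₂.edges i := hb2 i
        rw [← h1, ← h2]
        congr 1
        omega

lemma aval_ne_zero {K : Type} [Field K] {a : G.E → K} (ha : ∀ e, a e ≠ 0) (μ : G.FinPath) :
    aval a μ ≠ 0 := by
  refine List.prod_ne_zero ?_
  intro h0
  simp only [List.mem_map] at h0
  obtain ⟨e, _, he⟩ := h0
  exact ha e he

lemma aval_of_edges_append {K : Type} [Field K] (a : G.E → K) {μ ν σ : G.FinPath}
    (h : μ.edges = ν.edges ++ σ.edges) : aval a μ = aval a ν * aval a σ := by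
  simp [aval, h]

/-- The core of statement 0, with a WLOG assumption on the lengths. -/
lemma stmt0_core {K : Type} [Field K] {a : G.E → K} (ha : ∀ e, a e ≠ 0)
    {x y : G.BPath} (hx : ¬ IsRational x)
    {μ₁ μ₂ ν₁ ν₂ : G.FinPath} {p₁ p₂ : G.BPath}
    (h₁ : IsCat μ₁ p₁ y) (h₂ : IsCat μ₂ p₂ y)
    (h₃ : IsCat ν₁ p₁ x) (h₄ : IsCat ν₂ p₂ x) (hle : ν₁.length ≤ ν₂.length) :
    aval a μ₁ * (aval a ν₁)⁻¹ = aval a μ₂ * (aval a ν₂)⁻¹ ∧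
      (μ₁.length : ℤ) - (ν₁.length : ℤ) = (μ₂.length : ℤ) - (ν₂.length : ℤ) := by
  obtain ⟨σ, hσcat, hσsrc, hσ⟩ := exists_connector h₃ h₄ hle
  have hrng : μ₁.rng = σ.src := by rw [hσsrc, h₁.1]
  have hcat2 : IsCat (μ₁.cat σ hrng) p₂ y := h₁.cat hσcat hrng
  -- Tail equivalence of x with p₂, used to derive rationality in the bad case
  have htail : TailEq x p₂ := by
    refine ⟨(ν₂.length : ℤ), ν₂, vertexPath G p₂.src, p₂, h₄, isCat_nil p₂, ?_⟩
    simp [vertexPath, FinPath.length]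
  have key : μ₂.edges = μ₁.edges ++ σ.edges := by
    rcases le_total (μ₁.cat σ hrng).length μ₂.length with hle2 | hle2
    · obtain ⟨τ, hτcat, _, hτ⟩ := exists_connector hcat2 h₂ hle2
      have hτnil : τ.edges = [] := by
        by_contra hne
        exact hx ⟨τ, p₂, List.length_pos_iff.mpr hne, hτcat, htail⟩
      rw [hτ, hτnil, List.append_nil, FinPath.cat_edges]
    · obtain ⟨τ, hτcat, _, hτ⟩ := exists_connector h₂ hcat2 hle2
      have hτnil : τ.edges = [] := by
        by_contra hne
        exact hx ⟨τ, p₂, List.length_pos_iff.mpr hne, hτcat, htail⟩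
      have hh : (μ₁.cat σ hrng).edges = μ₂.edges := by
        rw [hτ, hτnil, List.append_nil]
      rw [← hh, FinPath.cat_edges]
  have hμlen : μ₂.length = μ₁.length + σ.edges.length := by
    show μ₂.edges.length = μ₁.edges.length + σ.edges.length
    rw [key, List.length_append]
  have hνlen : ν₂.length = ν₁.length + σ.edges.length := by
    show ν₂.edges.length = ν₁.edges.length + σ.edges.length
    rw [hσ, List.length_append]
  constructor
  · rw [aval_of_edges_append a key, aval_of_edges_append a hσ, mul_inv,
      ← mul_assoc, mul_assoc (aval a μ₁), mul_comm (aval a σ), ← mul_assoc,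
      mul_assoc, mul_inv_cancel₀ (aval_ne_zero ha σ), mul_one]
  · rw [hμlen, hνlen]
    push_cast
    ring

end DirGraph

/-- well-definedness of the lag and of the twisting scalar:
if `x ∈ ∂E` is not rational, `y` is tail-equivalent to `x`, and
`y = μ₁ p₁ = μ₂ p₂`, `x = ν₁ p₁ = ν₂ p₂`, then
`a_{μ₁} a_{ν₁}⁻¹ = a_{μ₂} a_{ν₂}⁻¹` and `|μ₁| - |ν₁| = |μ₂| - |ν₂|`. -/
theorem stmt_0 (G : DirGraph) (K : Type) [Field K] (a : G.E → K) (ha : ∀ e, a e ≠ 0)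
    (x y : G.BPath) (hx : ¬ IsRational x) (hxy : TailEq y x)
    (μ₁ μ₂ ν₁ ν₂ : G.FinPath) (p₁ p₂ : G.BPath)
    (h₁ : IsCat μ₁ p₁ y) (h₂ : IsCat μ₂ p₂ y)
    (h₃ : IsCat ν₁ p₁ x) (h₄ : IsCat ν₂ p₂ x) :
    aval a μ₁ * (aval a ν₁)⁻¹ = aval a μ₂ * (aval a ν₂)⁻¹ ∧
      (μ₁.length : ℤ) - (ν₁.length : ℤ) = (μ₂.length : ℤ) - (ν₂.length : ℤ) := by
  rcases le_total ν₁.length ν₂.length with h | h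
  · exact stmt0_core ha hx h₁ h₂ h₃ h₄ h
  · obtain ⟨c1, c2⟩ := stmt0_core ha hx h₂ h₁ h₄ h₃ h
    exact ⟨c1.symm, c2.symm⟩
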